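/- Let h^t be a vector with strictly positive entries, W a nonnegative matrix, ω a 0/1 vector, and ε > 0. Define K = diag([W^T diag(ω) W h^t + ε·1] ⊘ h^t), where ⊘ is elementwise division. Then K - W^T diag(ω) W is positive semi-definite. -/

import Mathlib

open Matrix

/-- With `K = diag((Wᵀ diag(ω) W hᵗ + ε·1) ⊘ hᵗ)`, the matrix `K - Wᵀ diag(ω) W` is
positive semi-definite. -/
theorem stmt3 {m n : ℕ} (W : Matrix (Fin m) (Fin n) ℝ) (hW : ∀ i j, 0 ≤ W i j)
    (ω : Fin m → ℝ) (hω : ∀ i, ω i = 0 ∨ ω i = 1)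
    (h : Fin n → ℝ) (hh : ∀ i, 0 < h i) (ε : ℝ) (hε : 0 < ε) :
    (Matrix.diagonal (fun i => ((Wᵀ * Matrix.diagonal ω * W).mulVec h i + ε) / h i)
      - Wᵀ * Matrix.diagonal ω * W).PosSemidef := by
  set A : Matrix (Fin n) (Fin n) ℝ := Wᵀ * Matrix.diagonal ω * W with hA_def
  have hω0 : ∀ i, 0 ≤ ω i := fun i => by rcases hω i with h' | h' <;> rw [h'] <;> norm_num
  have hAentry : ∀ i j, A i j = ∑ k, W k i * ω k * W k j := by
    intro i j
    rw [hA_def, Matrix.mul_assoc, Matrix.mul_apply]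
    refine Finset.sum_congr rfl fun k _ => ?_
    rw [Matrix.diagonal_mul, Matrix.transpose_apply]; ring
  have hApos : ∀ i j, 0 ≤ A i j := by
    intro i j
    rw [hAentry]
    exact Finset.sum_nonneg fun k _ => mul_nonneg (mul_nonneg (hW k i) (hω0 k)) (hW k j)
  have hAsymm : ∀ i j, A i j = A j i := by
    intro i j
    rw [hAentry, hAentry]
    refine Finset.sum_congr rfl fun k _ => by ring
  have hAherm : A.IsHermitian := by
    ext i j
    simp only [Matrix.conjTranspose_apply, star_trivial]
    exact hAsymm j i
  rw [Matrix.posSemidef_iff_dotProduct_mulVec]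
  constructor
  · exact (Matrix.isHermitian_diagonal _).sub hAherm
  · intro x
    simp only [star_trivial, Matrix.sub_mulVec, dotProduct_sub, sub_nonneg]
    have h1 : x ⬝ᵥ (Matrix.diagonal fun i => (A.mulVec h i + ε) / h i).mulVec x
        = ∑ i, ((∑ j, A i j * h j) + ε) / h i * (x i * x i) := by
      rw [dotProduct]
      refine Finset.sum_congr rfl fun i _ => ?_
      rw [Matrix.mulVec_diagonal]
      simp only [Matrix.mulVec, dotProduct]
      ring
    have h2 : x ⬝ᵥ A.mulVec x = ∑ i, ∑ j, A i j * x i * x j := by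
      simp [dotProduct, Matrix.mulVec, Finset.mul_sum]
      congr 1; funext i; congr 1; funext j; ring
    rw [h1, h2]
    have hne : ∀ i, h i ≠ 0 := fun i => (hh i).ne'
    -- rewrite each diagonal term
    have h3 : ∀ i, ((∑ j, A i j * h j) + ε) / h i * (x i * x i)
        = (∑ j, A i j * h j * (x i * x i) / h i) + ε / h i * (x i * x i) := by
      intro i
      rw [add_div, add_mul, div_mul_eq_mul_div, Finset.sum_mul, Finset.sum_div]
    simp only [h3]
    rw [Finset.sum_add_distrib]
    have hepos : 0 ≤ ∑ i, ε / h i * (x i * x i) :=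
      Finset.sum_nonneg fun i _ => mul_nonneg (div_nonneg hε.le (hh i).le) (mul_self_nonneg _)
    have key : ∑ i, ∑ j, A i j * x i * x j ≤ ∑ i, ∑ j, A i j * h j * (x i * x i) / h i := by
      have swap : ∑ i, ∑ j, A i j * h j * (x i * x i) / h i
          = ∑ i, ∑ j, A i j * h i * (x j * x j) / h j := by
        rw [Finset.sum_comm]
        refine Finset.sum_congr rfl fun i _ => Finset.sum_congr rfl fun j _ => ?_
        rw [hAsymm i j]
      have expand : ∑ i, ∑ j, A i j * (h j * x i - h i * x j)^2 / (h i * h j)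
          = (∑ i, ∑ j, A i j * h j * (x i * x i) / h i)
            + (∑ i, ∑ j, A i j * h i * (x j * x j) / h j)
            - 2 * ∑ i, ∑ j, A i j * x i * x j := by
        rw [← Finset.sum_add_distrib, Finset.mul_sum, ← Finset.sum_sub_distrib]
        refine Finset.sum_congr rfl fun i _ => ?_
        rw [← Finset.sum_add_distrib, Finset.mul_sum, ← Finset.sum_sub_distrib]
        refine Finset.sum_congr rfl fun j _ => ?_
        have hi := hne i
        have hj := hne j
        field_simp
        ring
      have hnn : 0 ≤ ∑ i, ∑ j, A i j * (h j * x i - h i * x j)^2 / (h i * h j) := by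
        refine Finset.sum_nonneg fun i _ => Finset.sum_nonneg fun j _ => ?_
        exact div_nonneg (mul_nonneg (hApos i j) (sq_nonneg _))
          (mul_nonneg (hh i).le (hh j).le)
      rw [expand, ← swap] at hnn
      linarith
    linarith
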